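/- Let b ≥ 2 be an integer with prime factorization b = p₁^{a₁} p₂^{a₂} ⋯ p_r^{a_r} with r ≥ 2 distinct primes, ordered so that a₁(p₁−1) > a_i(p_i−1) for all i ≥ 2, and let b' = b / p₁^{a₁}. Then for all sufficiently large n, ℓ_b(n!) · (b')^{v_{p₁^{a₁}}(n!)} ≡ ℓ_{p₁^{a₁}}(n!) (mod p₁^{a₁}). -/

import Mathlib

/-- The state reached after feeding the base-`k` digits of `n`
(most significant digit first, empty string for `n = 0`) into the
transition function `ρ` starting from state `q₀`. -/
def autoRun {Q : Type} (k : ℕ) (ρ : Q → Fin k → Q) (q₀ : Q) (n : ℕ) : Q :=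
  (Nat.digits k n).reverse.foldl (fun q d => if h : d < k then ρ q ⟨d, h⟩ else q) q₀

/-- A sequence `a : ℕ → Δ` is `k`-automatic: some DFAO over the alphabet
`{0, …, k-1}` computes `a n` from the base-`k` digits of `n`
(most significant digit first). -/
def IsAutomatic {Δ : Type*} (k : ℕ) (a : ℕ → Δ) : Prop :=
  ∃ (Q : Type) (_ : Finite Q) (ρ : Q → Fin k → Q) (q₀ : Q) (τ : Q → Δ),
    ∀ n : ℕ, a n = τ (autoRun k ρ q₀ n)

/-- `lnz b n` is the last nonzero digit of `n` in base `b`: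
`(n / b ^ v_b(n)) % b`, where `v_b(n) = padicValNat b n` is the largest `t`
with `b ^ t ∣ n`. -/
def lnz (b n : ℕ) : ℕ := (n / b ^ padicValNat b n) % b

/-- `digSum b n` is the sum of the digits of `n` written in base `b`. -/
def digSum (b n : ℕ) : ℕ := (Nat.digits b n).sum

private lemma sq_le_four_pow : ∀ m : ℕ, (m + 1) * (m + 1) ≤ 4 ^ (m + 1) := by
  intro m
  induction m with
  | zero => norm_num
  | succ k ih =>
    have h4 : (4:ℕ) ^ (k + 1 + 1) = 4 * 4 ^ (k + 1) := by ring
    nlinarith [ih]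

private lemma log_two_le_sqrt (n : ℕ) : Nat.log 2 n ≤ 2 * Nat.sqrt n + 1 := by
  rcases Nat.eq_zero_or_pos n with rfl | hn
  · simp
  have h2 : n < (Nat.sqrt n + 1) * (Nat.sqrt n + 1) := Nat.lt_succ_sqrt n
  have h3 : (Nat.sqrt n + 1) * (Nat.sqrt n + 1) ≤ 4 ^ (Nat.sqrt n + 1) :=
    sq_le_four_pow _
  have h4 : (4:ℕ) ^ (Nat.sqrt n + 1) ≤ 2 ^ (2 * Nat.sqrt n + 2) := by
    rw [show (4:ℕ) = 2 ^ 2 by norm_num, ← pow_mul]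
    apply Nat.pow_le_pow_right <;> omega
  have := Nat.log_lt_of_lt_pow hn.ne'
    (show n < 2 ^ (2 * Nat.sqrt n + 2) by omega)
  omega

private lemma digSum_le_of_le {p n B : ℕ} (hp : 2 ≤ p) (hB : p ≤ B) :
    digSum p n ≤ B * (2 * Nat.sqrt n + 2) := by
  rcases Nat.eq_zero_or_pos n with rfl | hn
  · simp [digSum]
  have hlen : (Nat.digits p n).length = Nat.log p n + 1 :=
    Nat.digits_len p n hp hn.ne'
  have hsum : (Nat.digits p n).sum ≤ (Nat.digits p n).length • (p - 1) :=
    List.sum_le_card_nsmul _ _ (fun x hx =>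
      Nat.le_sub_one_of_lt (Nat.digits_lt_base hp hx))
  have hlog : Nat.log p n ≤ Nat.log 2 n := Nat.log_anti_left (by norm_num) hp
  have h2 := log_two_le_sqrt n
  have : digSum p n ≤ (Nat.log p n + 1) * (p - 1) := by
    simpa [digSum, hlen, smul_eq_mul] using hsum
  calc digSum p n ≤ (Nat.log p n + 1) * (p - 1) := this
    _ ≤ (2 * Nat.sqrt n + 2) * B := Nat.mul_le_mul (by omega) (by omega)
    _ = B * (2 * Nat.sqrt n + 2) := Nat.mul_comm _ _

private lemma padicValNat_eq_of_dvd_not_dvd {q m t : ℕ} (hq : q ≠ 1) (hm : 0 < m)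
    (h1 : q ^ t ∣ m) (h2 : ¬ q ^ (t + 1) ∣ m) : padicValNat q m = t := by
  rw [padicValNat_def' hq hm.ne']
  exact multiplicity_eq_of_dvd_of_not_dvd h1 h2

private lemma prod_pow_dvd {r : ℕ} {p : Fin r → ℕ} (hp : ∀ i, (p i).Prime)
    (hpinj : Function.Injective p) (e : Fin r → ℕ) {m : ℕ}
    (h : ∀ i, p i ^ e i ∣ m) : (∏ i, p i ^ e i) ∣ m := by
  classical
  have key : ∀ s : Finset (Fin r), (∏ i ∈ s, p i ^ e i) ∣ m := by
    intro s
    induction s using Finset.induction with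
    | empty => simpa using one_dvd m
    | @insert j s' hi ih =>
      rw [Finset.prod_insert hi]
      refine Nat.Coprime.mul_dvd_of_dvd_of_dvd ?_ (h j) ih
      refine Nat.Coprime.prod_right fun k hk => ?_
      exact Nat.Coprime.pow _ _
        ((Nat.coprime_primes (hp j) (hp k)).mpr
          (fun hjk => hi (by rwa [hpinj hjk])))
  exact key Finset.univ

set_option maxHeartbeats 1000000 in
/-- Let `b = ∏ i, p i ^ a i` with `r ≥ 2` distinct primes, ordered so that
`a 0 * (p 0 - 1) > a i * (p i - 1)` for all `i ≠ 0`, and let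
`b' = b / p 0 ^ a 0`.  Then for all sufficiently large `n`,
`ℓ_b (n !) * b' ^ v_{p 0 ^ a 0} (n !) ≡ ℓ_{p 0 ^ a 0} (n !) [MOD p 0 ^ a 0]`. -/
theorem lnz_factorial_congruence_of_strict_max (b r : ℕ) (hb : 2 ≤ b) (hr : 2 ≤ r)
    (p a : Fin r → ℕ) (hp : ∀ i, (p i).Prime) (hpinj : Function.Injective p)
    (ha : ∀ i, 0 < a i) (hfac : b = ∏ i, p i ^ a i)
    (hmax : ∀ i : Fin r, i ≠ ⟨0, by omega⟩ →
      a i * (p i - 1) < a ⟨0, by omega⟩ * (p ⟨0, by omega⟩ - 1))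
    (b' : ℕ) (hb' : b' = b / p ⟨0, by omega⟩ ^ a ⟨0, by omega⟩) :
    ∃ N : ℕ, ∀ n : ℕ, N ≤ n →
      lnz b (Nat.factorial n) *
          b' ^ padicValNat (p ⟨0, by omega⟩ ^ a ⟨0, by omega⟩) (Nat.factorial n) ≡
        lnz (p ⟨0, by omega⟩ ^ a ⟨0, by omega⟩) (Nat.factorial n)
          [MOD p ⟨0, by omega⟩ ^ a ⟨0, by omega⟩] := by
  have h0r : 0 < r := by omega
  set i0 : Fin r := ⟨0, h0r⟩ with hi0def
  have hp0 : (p i0).Prime := hp i0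
  haveI hp0f : Fact (p i0).Prime := ⟨hp0⟩
  have hb0 : 0 < b := by omega
  have hqb : p i0 ^ a i0 ∣ b := hfac ▸ Finset.dvd_prod_of_mem _ (Finset.mem_univ i0)
  have hq1 : 1 < p i0 ^ a i0 := Nat.one_lt_pow (ha i0).ne' hp0.one_lt
  have hbq : b = p i0 ^ a i0 * b' := by
    rw [hb']; exact (Nat.mul_div_cancel' hqb).symm
  set A := a i0 * (p i0 - 1) with hAdef
  have hA1 : 1 ≤ A := Nat.mul_pos (ha i0) (by have := hp0.two_le; omega)
  set C := (A + 1) * b with hCdef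
  refine ⟨(4 * C + A + 4) * (4 * C + A + 4) + 1, fun n hn => ?_⟩
  set F := n.factorial with hFdef
  have hF0 : 0 < F := n.factorial_pos
  have hpib : ∀ i, p i ≤ b := by
    intro i
    refine Nat.le_of_dvd hb0 (dvd_trans (dvd_pow_self _ (ha i).ne') ?_)
    exact hfac ▸ Finset.dvd_prod_of_mem _ (Finset.mem_univ i)
  have hleg : ∀ i, (p i - 1) * padicValNat (p i) F = n - digSum (p i) n := by
    intro i
    haveI : Fact (p i).Prime := ⟨hp i⟩
    simpa [digSum, hFdef] using sub_one_mul_padicValNat_factorial (p := p i) n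
  have hsn : ∀ i, digSum (p i) n ≤ n := fun i => Nat.digit_sum_le _ _
  set sq := Nat.sqrt n with hsqdef
  set S := b * (2 * sq + 2) with hSdef
  have hsS : ∀ i, digSum (p i) n ≤ S := fun i => digSum_le_of_le (hp i).two_le (hpib i)
  have hsqrt : 4 * C + A + 4 ≤ sq := by
    have h := Nat.sqrt_le_sqrt (show (4*C+A+4) * (4*C+A+4) ≤ n by omega)
    rw [Nat.sqrt_eq] at h
    exact h
  have hnsq : sq * sq ≤ n := Nat.sqrt_le n
  obtain ⟨m0, hm0⟩ : ∃ m, padicValNat (p i0) F = m := ⟨_, rfl⟩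
  obtain ⟨V, hV⟩ : ∃ v, m0 / a i0 = v := ⟨_, rfl⟩
  have hddm := Nat.div_add_mod m0 (a i0)
  rw [hV] at hddm
  have hmlt : m0 % a i0 < a i0 := Nat.mod_lt _ (ha i0)
  have hmulsucc : a i0 * (V + 1) = a i0 * V + a i0 := Nat.mul_succ _ _
  have hmV : m0 + 1 ≤ a i0 * (V + 1) := by rw [hmulsucc]; omega
  have hleg0 : n = (p i0 - 1) * m0 + digSum (p i0) n := by
    have h4 := hleg i0
    rw [hm0] at h4
    have h5 := hsn i0
    omega
  have hP0 : 1 ≤ p i0 - 1 := by have := hp0.two_le; omega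
  have haiV : a i0 * V ≤ m0 := by omega
  have hAV : n + 1 ≤ A * (V + 1) + digSum (p i0) n := by
    have h2 : (p i0 - 1) * (m0 + 1) ≤ (p i0 - 1) * (a i0 * (V + 1)) :=
      Nat.mul_le_mul_left _ hmV
    have h3 : (p i0 - 1) * (a i0 * (V + 1)) = A * (V + 1) := by rw [hAdef]; ring
    have h2' : (p i0 - 1) * (m0 + 1) = (p i0 - 1) * m0 + (p i0 - 1) := Nat.mul_succ _ _
    linarith [hleg0]
  have hCS : A * S + A + S ≤ n := by
    have h1 : (4 * C + A + 4) * sq ≤ sq * sq := Nat.mul_le_mul_right _ hsqrt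
    have h2 : 1 ≤ sq := by omega
    have h3 : A * S + S = C * (2 * sq + 2) := by rw [hSdef, hCdef]; ring
    have h4 : C * 1 ≤ C * sq := Nat.mul_le_mul_left _ h2
    have h5 : A * 1 ≤ A * sq := Nat.mul_le_mul_left _ h2
    nlinarith [h1, hnsq, h2, h4, h5]
  have hSV : S ≤ V := by
    by_contra hc
    push_neg at hc
    have h1 : A * (V + 1) ≤ A * S := Nat.mul_le_mul_left _ (by omega)
    have h2 := hsS i0
    linarith [hAV, hCS]
  have haV : ∀ i, a i * V ≤ padicValNat (p i) F := by
    intro i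
    by_cases hi : i = i0
    · subst hi; rw [hm0]; exact haiV
    · have hPi : 1 ≤ p i - 1 := by have := (hp i).two_le; omega
      have hmx : a i * (p i - 1) + 1 ≤ A := hmax i hi
      have h1 : (a i * (p i - 1) + 1) * V ≤ A * V := Nat.mul_le_mul_right _ hmx
      have h1' : (a i * (p i - 1) + 1) * V = (p i - 1) * (a i * V) + V := by ring
      have h2 : A * V ≤ (p i0 - 1) * m0 := by
        calc A * V = (p i0 - 1) * (a i0 * V) := by rw [hAdef]; ring
          _ ≤ (p i0 - 1) * m0 := Nat.mul_le_mul_left _ haiV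
      have hlegi : n = (p i - 1) * padicValNat (p i) F + digSum (p i) n := by
        have h4 := hleg i
        have h5 := hsn i
        omega
      have hsi : digSum (p i) n ≤ V := le_trans (hsS i) hSV
      have h5 : (p i - 1) * (a i * V) ≤ (p i - 1) * padicValNat (p i) F := by
        linarith [hleg0, hlegi]
      exact Nat.le_of_mul_le_mul_left h5 (by omega)
  have hbVeq : b ^ V = ∏ i, p i ^ (a i * V) := by
    rw [hfac, ← Finset.prod_pow]
    exact Finset.prod_congr rfl fun i _ => (pow_mul _ _ _).symm
  have hdvdi : ∀ i, p i ^ (a i * V) ∣ F := fun i =>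
    dvd_trans (pow_dvd_pow _ (haV i)) pow_padicValNat_dvd
  have hbVF : b ^ V ∣ F := by rw [hbVeq]; exact prod_pow_dvd hp hpinj _ hdvdi
  have hnd : ¬ (p i0 ^ a i0) ^ (V + 1) ∣ F := by
    intro hdvd
    have h1 : p i0 ^ (m0 + 1) ∣ F :=
      dvd_trans (pow_dvd_pow _ hmV) (by rwa [← pow_mul] at hdvd)
    have hnot := pow_succ_padicValNat_not_dvd (p := p i0) hF0.ne'
    rw [hm0] at hnot
    exact hnot h1
  have hVq : padicValNat (p i0 ^ a i0) F = V :=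
    padicValNat_eq_of_dvd_not_dvd (by omega) hF0
      (by rw [← pow_mul]; exact hdvdi i0) hnd
  have hVb : padicValNat b F = V :=
    padicValNat_eq_of_dvd_not_dvd (by omega) hF0 hbVF
      (fun hdvd => hnd (dvd_trans (pow_dvd_pow_of_dvd hqb _) hdvd))
  obtain ⟨c, hc⟩ := hbVF
  have hqpow : 0 < (p i0 ^ a i0) ^ V := pow_pos (by omega) V
  have hFq : F / (p i0 ^ a i0) ^ V = b' ^ V * c := by
    rw [hc, hbq, mul_pow, mul_assoc, Nat.mul_div_cancel_left _ hqpow]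
  have hFb : F / b ^ V = c := by rw [hc, Nat.mul_div_cancel_left _ (pow_pos hb0 V)]
  rw [lnz, lnz, hVq, hVb, hFq, hFb]
  calc c % b * b' ^ V ≡ c * b' ^ V [MOD p i0 ^ a i0] :=
        ((Nat.mod_modEq c b).of_dvd hqb).mul_right _
    _ = b' ^ V * c := mul_comm _ _
    _ ≡ b' ^ V * c % (p i0 ^ a i0) [MOD p i0 ^ a i0] := (Nat.mod_modEq _ _).symm
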